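/- (Sampling Lemma) Let Λ ⊂ ℝ^n be a full-rank lattice and σ > 0. Let T ~ N(0, σ² I_n) and, conditionally on T = t, let X ~ D_{Λ+t, σ}. Then X and T are identically distributed, i.e. X ~ N(0, σ² I_n). Equivalently, for every Borel set A ⊆ ℝ^n, ∫_{ℝ^n} f_σ(t) · f_σ(A ∩ (Λ+t)) / f_σ(Λ+t) dt = ∫_A f_σ(x) dx. -/

import Mathlib

open MeasureTheory Real Filter Pointwise
open scoped ENNReal RealInnerProductSpace

noncomputable section

/-- The (continuous) Gaussian density with parameter `σ` on `ℝⁿ`: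
`f_σ(x) = (2πσ²)^{-n/2} exp(-‖x‖²/(2σ²))`. -/
def gaussF (n : ℕ) (σ : ℝ) (x : EuclideanSpace ℝ (Fin n)) : ℝ :=
  (2 * π * σ ^ 2) ^ (-(n : ℝ) / 2) * Real.exp (-‖x‖ ^ 2 / (2 * σ ^ 2))

/-- The Gaussian mass `f_σ(S) = Σ_{y ∈ S} f_σ(y)` of a (countable) set `S ⊆ ℝⁿ`. -/
def gaussMass (n : ℕ) (σ : ℝ) (S : Set (EuclideanSpace ℝ (Fin n))) : ℝ :=
  ∑' y : S, gaussF n σ y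

/-- The Gaussian measure `N(0, σ² Iₙ)` on `ℝⁿ`, given by its density w.r.t. Lebesgue measure. -/
def gaussMeasure (n : ℕ) (σ : ℝ) : Measure (EuclideanSpace ℝ (Fin n)) :=
  volume.withDensity fun x => ENNReal.ofReal (gaussF n σ x)

/-- The coset `S + t` of a set `S ⊆ ℝⁿ`, i.e. `{x | x - t ∈ S}`. -/
def coset (n : ℕ) (S : Set (EuclideanSpace ℝ (Fin n))) (t : EuclideanSpace ℝ (Fin n)) :
    Set (EuclideanSpace ℝ (Fin n)) := {x | x - t ∈ S}

/-- The Voronoi cell of `S`: `{x | ⟪x,y⟫ ≤ ‖y‖²/2 for all y ∈ S}`. -/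
def voronoi (n : ℕ) (S : Set (EuclideanSpace ℝ (Fin n))) : Set (EuclideanSpace ℝ (Fin n)) :=
  {x | ∀ y ∈ S, ⟪x, y⟫ ≤ ‖y‖ ^ 2 / 2}

/-- The inverse error function `err⁻¹_ε(Λ)`: the least `s > 0` such that a standard Gaussian
leaves `s · V(Λ)` with probability at most `ε`. -/
def errInv (n : ℕ) (ε : ℝ) (S : Set (EuclideanSpace ℝ (Fin n))) : ℝ :=
  sInf {s : ℝ | 0 < s ∧ gaussMeasure n 1 ((s • voronoi n S)ᶜ) ≤ ENNReal.ofReal ε}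

/-- The Shannon entropy (in nats) of the discrete Gaussian `D_{S,σ}` supported on `S`,
which assigns mass `f_σ(y)/f_σ(S)` to each `y ∈ S`. -/
def dgEntropy (n : ℕ) (σ : ℝ) (S : Set (EuclideanSpace ℝ (Fin n))) : ℝ :=
  -∑' y : S, (gaussF n σ y / gaussMass n σ S) * Real.log (gaussF n σ y / gaussMass n σ S)

/-- The flatness factor `ε_Λ(σ) = sup_{x ∈ V(Λ)} |V(Λ)·f_σ(Λ+x) − 1|`. -/
def flatness (n : ℕ) (L : Submodule ℤ (EuclideanSpace ℝ (Fin n))) (σ : ℝ) : ℝ :=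
  ⨆ x : voronoi n (L : Set (EuclideanSpace ℝ (Fin n))),
    |ZLattice.covolume L volume *
        gaussMass n σ (coset n (L : Set (EuclideanSpace ℝ (Fin n))) x) - 1|

/-! ### Auxiliary lemmas for the sampling lemma -/

section aux

lemma summable_gauss_int' {c : ℝ} (hc : 0 < c) :
    Summable (fun m : ℤ => Real.exp (-c * (m : ℝ) ^ 2)) := by
  have key : Summable (fun k : ℕ => Real.exp (-c * (k : ℝ) ^ 2)) := by
    refine Summable.of_nonneg_of_le (fun k => (Real.exp_pos _).le) (fun k => ?_)
      (summable_geometric_of_lt_one (Real.exp_pos (-c)).le ?_)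
    · rw [← Real.exp_nat_mul]
      apply Real.exp_le_exp.2
      have : (k : ℝ) ≤ (k : ℝ) ^ 2 := by
        exact_mod_cast Nat.le_self_pow two_ne_zero k
      nlinarith
    · rw [Real.exp_lt_one_iff]; linarith
  apply Summable.of_nat_of_neg <;> simpa using key

lemma summable_gauss_pi' (d : ℕ) {c : ℝ} (hc : 0 < c) :
    Summable (fun m : Fin d → ℤ => Real.exp (-c * ∑ i, ((m i : ℝ)) ^ 2)) := by
  induction d with
  | zero => exact Summable.of_finite
  | succ d ih =>
      have h := (summable_gauss_int' hc).mul_of_nonneg ih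
        (fun _ => (Real.exp_pos _).le) (fun _ => (Real.exp_pos _).le)
      rw [← (Fin.consEquiv (fun _ : Fin (d+1) => ℤ)).summable_iff]
      convert h using 2 with p
      simp only [Function.comp, Fin.consEquiv_apply]
      rw [← Real.exp_add, Fin.sum_univ_succ]
      simp [mul_add]

set_option maxHeartbeats 1000000 in
set_option synthInstance.maxHeartbeats 100000 in
lemma summable_gauss_lattice (n : ℕ) (L : Submodule ℤ (EuclideanSpace ℝ (Fin n)))
    [DiscreteTopology L] [IsZLattice ℝ L] {a : ℝ} (ha : 0 < a) (t : EuclideanSpace ℝ (Fin n)) :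
    Summable (fun l : L => Real.exp (-a * ‖(l : EuclideanSpace ℝ (Fin n)) + t‖ ^ 2)) := by
  classical
  set ι := Module.Free.ChooseBasisIndex ℤ L with hι
  let b : Module.Basis ι ℤ L := Module.Free.chooseBasis ℤ L
  let b' : Module.Basis ι ℝ (EuclideanSpace ℝ (Fin n)) := Module.Basis.ofZLatticeBasis ℝ L b
  let e : EuclideanSpace ℝ (Fin n) ≃L[ℝ] (ι → ℝ) := LinearEquiv.toContinuousLinearEquiv b'.equivFun
  let E : EuclideanSpace ℝ (Fin n) →L[ℝ] (ι → ℝ) := e.toContinuousLinearMap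
  set K : ℝ := ‖E‖ with hK
  have hKnn : 0 ≤ K := hK ▸ norm_nonneg E
  set D : ℝ := (Fintype.card ι : ℝ) * K ^ 2 + 1 with hD
  have hDpos : 0 < D := by positivity
  have hrepr : ∀ (l : L) (i : ι), E (l : EuclideanSpace ℝ (Fin n)) i = ((b.repr l i : ℤ) : ℝ) := by
    intro l i
    show b'.equivFun (l : EuclideanSpace ℝ (Fin n)) i = _
    rw [Module.Basis.equivFun_apply]
    exact Module.Basis.ofZLatticeBasis_repr_apply ℝ L b l i
  have hsumsq : ∀ l : L, ∑ i, ((b.repr l i : ℝ)) ^ 2 ≤ D * ‖(l : EuclideanSpace ℝ (Fin n))‖ ^ 2 := by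
    intro l
    have h1 : ∀ i, ((b.repr l i : ℝ)) ^ 2 ≤ ‖E (l : EuclideanSpace ℝ (Fin n))‖ ^ 2 := by
      intro i
      have h0 := norm_le_pi_norm (E (l : EuclideanSpace ℝ (Fin n))) i
      rw [hrepr l i, Real.norm_eq_abs] at h0
      nlinarith [abs_nonneg ((b.repr l i : ℤ) : ℝ), sq_abs ((b.repr l i : ℤ) : ℝ)]
    have h2 : ‖E (l : EuclideanSpace ℝ (Fin n))‖ ≤ K * ‖(l : EuclideanSpace ℝ (Fin n))‖ :=
      E.le_opNorm _
    calc ∑ i, ((b.repr l i : ℝ)) ^ 2 ≤ ∑ _i : ι, ‖E (l : EuclideanSpace ℝ (Fin n))‖ ^ 2 :=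
          Finset.sum_le_sum (fun i _ => h1 i)
      _ = (Fintype.card ι : ℝ) * ‖E (l : EuclideanSpace ℝ (Fin n))‖ ^ 2 := by
          rw [Finset.sum_const]; simp [Finset.card_univ, nsmul_eq_mul]
      _ ≤ D * ‖(l : EuclideanSpace ℝ (Fin n))‖ ^ 2 := by
          have h3 : ‖E (l : EuclideanSpace ℝ (Fin n))‖^2 ≤ (K * ‖(l : EuclideanSpace ℝ (Fin n))‖)^2 := by
            nlinarith [norm_nonneg (E (l : EuclideanSpace ℝ (Fin n))), norm_nonneg (l : EuclideanSpace ℝ (Fin n))]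
          have h4 : (0:ℝ) ≤ (Fintype.card ι : ℝ) := Nat.cast_nonneg _
          rw [hD]
          nlinarith [norm_nonneg (l : EuclideanSpace ℝ (Fin n))]
  set c : ℝ := a / (2 * D) with hc
  have hcpos : 0 < c := by positivity
  set g : (ι → ℤ) → ℝ := fun m => Real.exp (-c * ∑ i, ((m i : ℝ)) ^ 2) with hg
  have hgsum : Summable g := by
    let q : ι ≃ Fin (Fintype.card ι) := Fintype.equivFin ι
    let w : (ι → ℤ) ≃ (Fin (Fintype.card ι) → ℤ) := Equiv.arrowCongr q (Equiv.refl ℤ)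
    rw [← w.symm.summable_iff]
    have : (g ∘ w.symm) = fun m : Fin (Fintype.card ι) → ℤ =>
        Real.exp (-c * ∑ i, ((m i : ℝ)) ^ 2) := by
      funext m
      simp only [Function.comp, hg, w, Equiv.arrowCongr, Equiv.coe_fn_symm_mk, Equiv.refl]
      congr 1
      rw [← Equiv.sum_comp q (fun j => ((m j : ℝ)) ^ 2)]
      simp
    rw [this]
    exact summable_gauss_pi' _ hcpos
  set r : L → (ι → ℤ) := fun l i => b.repr l i with hr
  have hrinj : Function.Injective r := by
    intro l l' h
    have : b.repr l = b.repr l' := Finsupp.ext (fun i => congr_fun h i)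
    exact b.repr.injective this
  have hcomp : Summable (g ∘ r) := hgsum.comp_injective hrinj
  refine Summable.of_nonneg_of_le (fun l => (Real.exp_pos _).le) (fun l => ?_)
    ((hcomp.mul_left (Real.exp (a * ‖t‖ ^ 2))))
  show Real.exp (-a * ‖(l : EuclideanSpace ℝ (Fin n)) + t‖ ^ 2) ≤ Real.exp (a * ‖t‖ ^ 2) * g (r l)
  rw [hg]
  simp only []
  rw [← Real.exp_add]
  apply Real.exp_le_exp.2
  have hsq := hsumsq l
  have hnorm : ‖(l : EuclideanSpace ℝ (Fin n))‖ ≤ ‖(l : EuclideanSpace ℝ (Fin n)) + t‖ + ‖t‖ := by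
    have := norm_add_le ((l : EuclideanSpace ℝ (Fin n)) + t) (-t)
    simpa using this
  have h2 : ‖(l : EuclideanSpace ℝ (Fin n))‖ ^ 2 ≤ 2 * ‖(l : EuclideanSpace ℝ (Fin n)) + t‖ ^ 2 + 2 * ‖t‖ ^ 2 := by
    nlinarith [hnorm, sq_nonneg (‖(l : EuclideanSpace ℝ (Fin n)) + t‖ - ‖t‖), norm_nonneg ((l : EuclideanSpace ℝ (Fin n)) + t), norm_nonneg t, norm_nonneg (l : EuclideanSpace ℝ (Fin n))]
  have hcD : c * D = a / 2 := by
    rw [hc]; field_simp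
  have h5 : c * ∑ i, ((r l i : ℝ)) ^ 2 ≤ c * (D * ‖(l : EuclideanSpace ℝ (Fin n))‖ ^ 2) :=
    mul_le_mul_of_nonneg_left hsq hcpos.le
  have h6 : c * (D * ‖(l : EuclideanSpace ℝ (Fin n))‖ ^ 2) = (a/2) * ‖(l : EuclideanSpace ℝ (Fin n))‖ ^ 2 := by
    rw [← hcD]; ring
  have h7 := mul_le_mul_of_nonneg_left h2 (by positivity : (0:ℝ) ≤ a/2)
  have h8 : c * ∑ i, ((r l i : ℝ)) ^ 2 ≤ a * ‖(l : EuclideanSpace ℝ (Fin n)) + t‖ ^ 2 + a * ‖t‖ ^ 2 := by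
    calc c * ∑ i, ((r l i : ℝ)) ^ 2 ≤ c * (D * ‖(l : EuclideanSpace ℝ (Fin n))‖ ^ 2) := h5
      _ = a / 2 * ‖(l : EuclideanSpace ℝ (Fin n))‖ ^ 2 := h6
      _ ≤ a / 2 * (2 * ‖(l : EuclideanSpace ℝ (Fin n)) + t‖ ^ 2 + 2 * ‖t‖ ^ 2) := h7
      _ = a * ‖(l : EuclideanSpace ℝ (Fin n)) + t‖ ^ 2 + a * ‖t‖ ^ 2 := by ring
  linarith [h8]

lemma gaussF_pos (n : ℕ) {σ : ℝ} (hσ : 0 < σ) (x : EuclideanSpace ℝ (Fin n)) :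
    0 < gaussF n σ x := by
  unfold gaussF
  have h1 : (0:ℝ) < 2 * π * σ ^ 2 := by positivity
  positivity

lemma measurable_gaussF (n : ℕ) (σ : ℝ) : Measurable (gaussF n σ) := by
  have h : Continuous fun x : EuclideanSpace ℝ (Fin n) => -‖x‖ ^ 2 / (2 * σ ^ 2) :=
    ((continuous_norm.pow 2).neg).div_const _
  exact (continuous_const.mul (Real.continuous_exp.comp h)).measurable

lemma summable_gaussF_shift (n : ℕ) (L : Submodule ℤ (EuclideanSpace ℝ (Fin n)))
    [DiscreteTopology L] [IsZLattice ℝ L] {σ : ℝ} (hσ : 0 < σ) (t : EuclideanSpace ℝ (Fin n)) :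
    Summable (fun l : L => gaussF n σ ((l : EuclideanSpace ℝ (Fin n)) + t)) := by
  have ha : (0:ℝ) < 1 / (2 * σ ^ 2) := by positivity
  have h := (summable_gauss_lattice n L ha t).mul_left ((2 * π * σ ^ 2) ^ (-(n : ℝ) / 2))
  convert h using 2 with l
  · rfl
  unfold gaussF
  congr 1
  congr 1
  field_simp


lemma tsum_coset' (n : ℕ) (L : Submodule ℤ (EuclideanSpace ℝ (Fin n)))
    (g : EuclideanSpace ℝ (Fin n) → ℝ) (t : EuclideanSpace ℝ (Fin n)) :
    (∑' y : coset n (L : Set (EuclideanSpace ℝ (Fin n))) t, g y)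
      = ∑' l : L, g ((l : EuclideanSpace ℝ (Fin n)) + t) := by
  let e : L ≃ coset n (L : Set (EuclideanSpace ℝ (Fin n))) t :=
    { toFun := fun l => ⟨(l : EuclideanSpace ℝ (Fin n)) + t, by
        simp [coset, Set.mem_setOf_eq, add_sub_cancel_right]⟩
      invFun := fun y => ⟨y.1 - t, y.2⟩
      left_inv := fun l => by ext; simp
      right_inv := fun y => by ext; simp }
  rw [← Equiv.tsum_eq e (fun y : coset n (L : Set (EuclideanSpace ℝ (Fin n))) t => g y)]
  exact tsum_congr fun l => rfl

end aux

/-- Sampling Lemma: if `T ~ N(0,σ²Iₙ)` and `X ~ D_{Λ+T,σ}`, then `X ~ N(0,σ²Iₙ)`;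
equivalently `∫ f_σ(t)·f_σ(A ∩ (Λ+t))/f_σ(Λ+t) dt = ∫_A f_σ(x) dx` for every Borel `A`. -/
theorem sampling_lemma (n : ℕ) (L : Submodule ℤ (EuclideanSpace ℝ (Fin n)))
    [DiscreteTopology L] [IsZLattice ℝ L] (σ : ℝ) (hσ : 0 < σ)
    (A : Set (EuclideanSpace ℝ (Fin n))) (hA : MeasurableSet A) :
    ∫ t, gaussF n σ t *
        (gaussMass n σ (A ∩ coset n (L : Set (EuclideanSpace ℝ (Fin n))) t) /
          gaussMass n σ (coset n (L : Set (EuclideanSpace ℝ (Fin n))) t)) =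
      ∫ x in A, gaussF n σ x := by
  classical
  haveI : Countable L :=
    Countable.of_equiv _ (Module.Free.chooseBasis ℤ L).repr.toEquiv.symm
  have hfpos : ∀ x, 0 < gaussF n σ x := gaussF_pos n hσ
  have hfmeas := measurable_gaussF n σ
  have hsum : ∀ t, Summable (fun l : L => gaussF n σ ((l : EuclideanSpace ℝ (Fin n)) + t)) :=
    fun t => summable_gaussF_shift n L hσ t
  have hindnonneg : ∀ x, 0 ≤ A.indicator (gaussF n σ) x :=
    fun x => Set.indicator_nonneg (fun y _ => (hfpos y).le) x
  have hindle : ∀ x, A.indicator (gaussF n σ) x ≤ gaussF n σ x := by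
    intro x
    by_cases h : x ∈ A
    · rw [Set.indicator_of_mem h]
    · rw [Set.indicator_of_notMem h]; exact (hfpos x).le
  have hsumA : ∀ t, Summable
      (fun l : L => A.indicator (gaussF n σ) ((l : EuclideanSpace ℝ (Fin n)) + t)) :=
    fun t => Summable.of_nonneg_of_le (fun l => hindnonneg _) (fun l => hindle _) (hsum t)
  set F : EuclideanSpace ℝ (Fin n) → ℝ≥0∞ := fun x => ENNReal.ofReal (gaussF n σ x) with hF
  set FA : EuclideanSpace ℝ (Fin n) → ℝ≥0∞ :=
    fun x => ENNReal.ofReal (A.indicator (gaussF n σ) x) with hFA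
  set Me : EuclideanSpace ℝ (Fin n) → ℝ≥0∞ :=
    fun t => ∑' l : L, F ((l : EuclideanSpace ℝ (Fin n)) + t) with hMe
  set MAe : EuclideanSpace ℝ (Fin n) → ℝ≥0∞ :=
    fun t => ∑' l : L, FA ((l : EuclideanSpace ℝ (Fin n)) + t) with hMAe
  have hFmeas : Measurable F := hfmeas.ennreal_ofReal
  have hFAmeas : Measurable FA := (hfmeas.indicator hA).ennreal_ofReal
  have hMemeas : Measurable Me :=
    Measurable.ennreal_tsum (fun l => hFmeas.comp (measurable_const_add _))
  have hMAemeas : Measurable MAe :=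
    Measurable.ennreal_tsum (fun l => hFAmeas.comp (measurable_const_add _))
  have hMeOf : ∀ t, ENNReal.ofReal
      (∑' l : L, gaussF n σ ((l : EuclideanSpace ℝ (Fin n)) + t)) = Me t := fun t =>
    ENNReal.ofReal_tsum_of_nonneg (fun l => (hfpos _).le) (hsum t)
  have hMAeOf : ∀ t, ENNReal.ofReal
      (∑' l : L, A.indicator (gaussF n σ) ((l : EuclideanSpace ℝ (Fin n)) + t)) = MAe t :=
    fun t => ENNReal.ofReal_tsum_of_nonneg (fun l => hindnonneg _) (hsumA t)
  have hMrealpos : ∀ t, 0 < ∑' l : L, gaussF n σ ((l : EuclideanSpace ℝ (Fin n)) + t) := by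
    intro t
    have h0 : 0 < gaussF n σ (((0 : L) : EuclideanSpace ℝ (Fin n)) + t) := hfpos _
    exact Summable.tsum_pos (hsum t) (fun l => (hfpos _).le) 0 h0
  have hMene : ∀ t, Me t ≠ 0 := fun t => by
    rw [← hMeOf t]; exact (ENNReal.ofReal_pos.2 (hMrealpos t)).ne'
  have hMetop : ∀ t, Me t ≠ ∞ := fun t => by rw [← hMeOf t]; exact ENNReal.ofReal_ne_top
  have hMAetop : ∀ t, MAe t ≠ ∞ := fun t => by rw [← hMAeOf t]; exact ENNReal.ofReal_ne_top
  have hmass : ∀ t, gaussMass n σ (coset n (L : Set (EuclideanSpace ℝ (Fin n))) t)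
      = ∑' l : L, gaussF n σ ((l : EuclideanSpace ℝ (Fin n)) + t) :=
    fun t => tsum_coset' n L _ t
  have hmassA : ∀ t, gaussMass n σ (A ∩ coset n (L : Set (EuclideanSpace ℝ (Fin n))) t)
      = ∑' l : L, A.indicator (gaussF n σ) ((l : EuclideanSpace ℝ (Fin n)) + t) := by
    intro t
    have h1 : gaussMass n σ (A ∩ coset n (L : Set (EuclideanSpace ℝ (Fin n))) t)
        = ∑' x, (A ∩ coset n (L : Set (EuclideanSpace ℝ (Fin n))) t).indicator (gaussF n σ) x :=
      tsum_subtype _ _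
    have h2 : (∑' y : coset n (L : Set (EuclideanSpace ℝ (Fin n))) t,
          A.indicator (gaussF n σ) y)
        = ∑' l : L, A.indicator (gaussF n σ) ((l : EuclideanSpace ℝ (Fin n)) + t) :=
      tsum_coset' n L _ t
    rw [← h2, tsum_subtype, h1]
    congr 1
    funext x
    rw [Set.indicator_indicator, Set.inter_comm]
  have hofR : ∀ t, ENNReal.ofReal (gaussF n σ t *
        (gaussMass n σ (A ∩ coset n (L : Set (EuclideanSpace ℝ (Fin n))) t) /
          gaussMass n σ (coset n (L : Set (EuclideanSpace ℝ (Fin n))) t)))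
      = F t * (MAe t / Me t) := by
    intro t
    rw [hmass, hmassA, ENNReal.ofReal_mul (hfpos t).le,
        ENNReal.ofReal_div_of_pos (hMrealpos t), hMeOf, hMAeOf]
  have hint_nonneg : ∀ t, 0 ≤ gaussF n σ t *
      (gaussMass n σ (A ∩ coset n (L : Set (EuclideanSpace ℝ (Fin n))) t) /
        gaussMass n σ (coset n (L : Set (EuclideanSpace ℝ (Fin n))) t)) := by
    intro t
    apply mul_nonneg (hfpos t).le
    apply div_nonneg
    · exact tsum_nonneg (fun y => (hfpos _).le)
    · exact tsum_nonneg (fun y => (hfpos _).le)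
  have hpt : ∀ t, gaussF n σ t *
      (gaussMass n σ (A ∩ coset n (L : Set (EuclideanSpace ℝ (Fin n))) t) /
        gaussMass n σ (coset n (L : Set (EuclideanSpace ℝ (Fin n))) t))
      = (F t * (MAe t / Me t)).toReal := by
    intro t
    rw [← hofR t, ENNReal.toReal_ofReal (hint_nonneg t)]
  have hΦmeas : Measurable (fun t => F t * (MAe t / Me t)) :=
    hFmeas.mul (hMAemeas.div hMemeas)
  have hΦfin : ∀ t, F t * (MAe t / Me t) < ∞ := by
    intro t
    refine ENNReal.mul_lt_top ?_ ?_
    · exact ENNReal.ofReal_lt_top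
    · exact ENNReal.div_lt_top (hMAetop t) (hMene t)
  have hL : (∫ t, gaussF n σ t *
      (gaussMass n σ (A ∩ coset n (L : Set (EuclideanSpace ℝ (Fin n))) t) /
        gaussMass n σ (coset n (L : Set (EuclideanSpace ℝ (Fin n))) t)))
      = (∫⁻ t, F t * (MAe t / Me t)).toReal := by
    simp_rw [hpt]
    exact integral_toReal hΦmeas.aemeasurable (ae_of_all _ hΦfin)
  have hR : (∫ x in A, gaussF n σ x) = (∫⁻ x in A, F x).toReal := by
    have hptR : ∀ x, gaussF n σ x = (F x).toReal := fun x =>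
      (ENNReal.toReal_ofReal (hfpos x).le).symm
    simp_rw [hptR]
    exact integral_toReal hFmeas.aemeasurable (ae_of_all _ (fun x => ENNReal.ofReal_lt_top))
  rw [hL, hR]
  congr 1
  have hms : ∀ l : L, Measurable (fun t =>
      F t * FA ((l : EuclideanSpace ℝ (Fin n)) + t) * (Me t)⁻¹) := fun l =>
    (hFmeas.mul (hFAmeas.comp (measurable_const_add _))).mul hMemeas.inv
  have hms' : ∀ l : L, Measurable (fun u =>
      F (u - (l : EuclideanSpace ℝ (Fin n))) * FA u * (Me u)⁻¹) := fun l =>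
    ((hFmeas.comp (measurable_id.sub_const _)).mul hFAmeas).mul hMemeas.inv
  have hMshift : ∀ (u : EuclideanSpace ℝ (Fin n)) (l : L),
      Me (u - (l : EuclideanSpace ℝ (Fin n))) = Me u := by
    intro u l
    have heq := Equiv.tsum_eq (Equiv.addRight l)
      (fun m : L => F ((m : EuclideanSpace ℝ (Fin n)) + (u - (l : EuclideanSpace ℝ (Fin n)))))
    show (∑' m : L, F ((m : EuclideanSpace ℝ (Fin n)) + (u - (l : EuclideanSpace ℝ (Fin n)))))
      = ∑' m : L, F ((m : EuclideanSpace ℝ (Fin n)) + u)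
    rw [← heq]
    apply tsum_congr
    intro m
    congr 1
    simp only [Equiv.coe_addRight, Submodule.coe_add]
    abel
  have hMneg : ∀ u : EuclideanSpace ℝ (Fin n),
      (∑' l : L, F (u - (l : EuclideanSpace ℝ (Fin n)))) = Me u := by
    intro u
    have heq := Equiv.tsum_eq (Equiv.neg L)
      (fun l : L => F (u - (l : EuclideanSpace ℝ (Fin n))))
    rw [← heq]
    show (∑' m : L, F (u - ((-m : L) : EuclideanSpace ℝ (Fin n))))
      = ∑' m : L, F ((m : EuclideanSpace ℝ (Fin n)) + u)
    apply tsum_congr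
    intro m
    congr 1
    push_cast
    abel
  calc ∫⁻ t, F t * (MAe t / Me t)
      = ∫⁻ t, ∑' l : L, F t * FA ((l : EuclideanSpace ℝ (Fin n)) + t) * (Me t)⁻¹ := by
        apply lintegral_congr
        intro t
        calc F t * (MAe t / Me t) = F t * (MAe t * (Me t)⁻¹) := by rw [div_eq_mul_inv]
          _ = F t * ((∑' l : L, FA ((l : EuclideanSpace ℝ (Fin n)) + t)) * (Me t)⁻¹) := rfl
          _ = F t * (∑' l : L, FA ((l : EuclideanSpace ℝ (Fin n)) + t) * (Me t)⁻¹) := by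
              rw [ENNReal.tsum_mul_right]
          _ = ∑' l : L, F t * (FA ((l : EuclideanSpace ℝ (Fin n)) + t) * (Me t)⁻¹) := by
              rw [ENNReal.tsum_mul_left]
          _ = ∑' l : L, F t * FA ((l : EuclideanSpace ℝ (Fin n)) + t) * (Me t)⁻¹ := by
              simp_rw [mul_assoc]
    _ = ∑' l : L, ∫⁻ t, F t * FA ((l : EuclideanSpace ℝ (Fin n)) + t) * (Me t)⁻¹ :=
        lintegral_tsum (fun l => (hms l).aemeasurable)
    _ = ∑' l : L, ∫⁻ u, F (u - (l : EuclideanSpace ℝ (Fin n))) * FA u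
          * (Me (u - (l : EuclideanSpace ℝ (Fin n))))⁻¹ := by
        apply tsum_congr
        intro l
        rw [← lintegral_add_right_eq_self (fun u =>
          F (u - (l : EuclideanSpace ℝ (Fin n))) * FA u
            * (Me (u - (l : EuclideanSpace ℝ (Fin n))))⁻¹) ((l : EuclideanSpace ℝ (Fin n)))]
        apply lintegral_congr
        intro t
        simp only [add_sub_cancel_right]
        rw [add_comm t (l : EuclideanSpace ℝ (Fin n))]
    _ = ∑' l : L, ∫⁻ u, F (u - (l : EuclideanSpace ℝ (Fin n))) * FA u * (Me u)⁻¹ := by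
        apply tsum_congr
        intro l
        apply lintegral_congr
        intro u
        rw [hMshift u l]
    _ = ∫⁻ u, ∑' l : L, F (u - (l : EuclideanSpace ℝ (Fin n))) * FA u * (Me u)⁻¹ :=
        (lintegral_tsum (fun l => (hms' l).aemeasurable)).symm
    _ = ∫⁻ u, FA u := by
        apply lintegral_congr
        intro u
        calc (∑' l : L, F (u - (l : EuclideanSpace ℝ (Fin n))) * FA u * (Me u)⁻¹)
            = (∑' l : L, F (u - (l : EuclideanSpace ℝ (Fin n)))) * (FA u * (Me u)⁻¹) := by
              simp_rw [mul_assoc]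
              exact ENNReal.tsum_mul_right
          _ = Me u * (FA u * (Me u)⁻¹) := by rw [hMneg u]
          _ = FA u * (Me u * (Me u)⁻¹) := by ring
          _ = FA u := by rw [ENNReal.mul_inv_cancel (hMene u) (hMetop u), mul_one]
    _ = ∫⁻ u, A.indicator F u := by
        apply lintegral_congr
        intro u
        by_cases h : u ∈ A
        · simp [hFA, hF, Set.indicator_of_mem h]
        · simp [hFA, hF, Set.indicator_of_notMem h]
    _ = ∫⁻ x in A, F x := lintegral_indicator hA F
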